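/- If strong duality holds, i.e., max over w in the probability simplex S of d₂(w) equals η_∞², and ξ* = p*/q* is a minimax approximant with reference set X_e(ξ*) = {xⱼ : |fⱼ − ξ*(xⱼ)| = η_∞}, then for any subset X̆ of the nodes containing X_e(ξ*), the restricted dual problem max over w̆ in the simplex over X̆ of d̆₂(w̆) also has optimal value η_∞², where d̆₂ is defined as d₂ but with the sums restricted to nodes in X̆. -/

import Mathlib

open Polynomial

/-- The dual objective function restricted to nodes in a subset `T`. -/
noncomputable def d2S {m : ℕ} (n₁ n₂ : ℕ) (x f : Fin m → ℂ) (T : Finset (Fin m))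
    (w : Fin m → ℝ) : ℝ :=
  sInf {s : ℝ | ∃ p q : Polynomial ℂ, p.natDegree ≤ n₁ ∧ q.natDegree ≤ n₂ ∧
    (∑ j ∈ T, w j * ‖q.eval (x j)‖ ^ 2) = 1 ∧
    s = ∑ j ∈ T, w j * ‖f j * q.eval (x j) - p.eval (x j)‖ ^ 2}

lemma d2S_le_aux {m : ℕ} (n₁ n₂ : ℕ) (x f : Fin m → ℂ) (T : Finset (Fin m))
    (p q : Polynomial ℂ) (hp : p.natDegree ≤ n₁) (hq : q.natDegree ≤ n₂)
    (hq0 : ∀ j, q.eval (x j) ≠ 0) (η : ℝ)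
    (hub : ∀ j, ‖f j - p.eval (x j) / q.eval (x j)‖ ≤ η)
    (w : Fin m → ℝ) (hw0 : ∀ j, 0 ≤ w j) (hw1 : ∑ j ∈ T, w j = 1) :
    d2S n₁ n₂ x f T w ≤ η ^ 2 := by
  set S := ∑ j ∈ T, w j * ‖q.eval (x j)‖ ^ 2 with hS
  have hterm : ∀ j ∈ T, 0 ≤ w j * ‖q.eval (x j)‖ ^ 2 := fun j _ =>
    mul_nonneg (hw0 j) (by positivity)
  have hSpos : 0 < S := by
    obtain ⟨j₀, hj₀T, hj₀⟩ : ∃ j ∈ T, w j ≠ 0 := by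
      by_contra h
      push_neg at h
      have : (∑ j ∈ T, w j) = 0 := Finset.sum_eq_zero h
      rw [hw1] at this; norm_num at this
    have h1 : 0 < w j₀ * ‖q.eval (x j₀)‖ ^ 2 :=
      mul_pos (lt_of_le_of_ne (hw0 j₀) (Ne.symm hj₀))
        (pow_pos (norm_pos_iff.mpr (hq0 j₀)) 2)
    exact lt_of_lt_of_le h1 (Finset.single_le_sum hterm hj₀T)
  set c : ℝ := (Real.sqrt S)⁻¹ with hc
  have hsq : 0 < Real.sqrt S := Real.sqrt_pos.mpr hSpos
  have hcpos : 0 < c := inv_pos.mpr hsq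
  have hc2 : c ^ 2 * S = 1 := by
    rw [hc, inv_pow, Real.sq_sqrt hSpos.le]
    exact inv_mul_cancel₀ hSpos.ne'
  have habsc : ‖(c : ℂ)‖ = c := by
    rw [Complex.norm_of_nonneg hcpos.le]
  -- the candidate value
  have hkey : ∀ j, ‖f j * q.eval (x j) - p.eval (x j)‖
      = ‖q.eval (x j)‖ * ‖f j - p.eval (x j) / q.eval (x j)‖ := by
    intro j
    rw [← norm_mul]
    congr 1
    field_simp [hq0 j]
  apply le_trans (csInf_le ?_ ?_)
  · -- value bound
    calc ∑ j ∈ T, w j * ‖f j * (Polynomial.C (c:ℂ) * q).eval (x j)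
          - (Polynomial.C (c:ℂ) * p).eval (x j)‖ ^ 2
        ≤ ∑ j ∈ T, w j * ‖q.eval (x j)‖ ^ 2 * (c ^ 2 * η ^ 2) := by
          apply Finset.sum_le_sum
          intro j hj
          have : ‖f j * (Polynomial.C (c:ℂ) * q).eval (x j)
              - (Polynomial.C (c:ℂ) * p).eval (x j)‖
              = c * (‖q.eval (x j)‖ * ‖f j - p.eval (x j) / q.eval (x j)‖) := by
            have hre : f j * ((c:ℂ) * q.eval (x j)) - (c:ℂ) * p.eval (x j)
                = (c:ℂ) * (f j * q.eval (x j) - p.eval (x j)) := by ring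
            rw [eval_mul, eval_mul, eval_C, hre, norm_mul, habsc, hkey j]
          rw [this]
          have h2 : (c * (‖q.eval (x j)‖ * ‖f j - p.eval (x j) / q.eval (x j)‖)) ^ 2
              ≤ c ^ 2 * (‖q.eval (x j)‖ ^ 2 * η ^ 2) := by
            rw [mul_pow, mul_pow]
            exact mul_le_mul_of_nonneg_left (mul_le_mul_of_nonneg_left
              (pow_le_pow_left₀ (norm_nonneg _) (hub j) 2) (sq_nonneg _)) (sq_nonneg c)
          calc w j * (c * (‖q.eval (x j)‖ * ‖f j - p.eval (x j) / q.eval (x j)‖)) ^ 2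
              ≤ w j * (c ^ 2 * (‖q.eval (x j)‖ ^ 2 * η ^ 2)) :=
                mul_le_mul_of_nonneg_left h2 (hw0 j)
            _ = w j * ‖q.eval (x j)‖ ^ 2 * (c ^ 2 * η ^ 2) := by ring
      _ = S * (c ^ 2 * η ^ 2) := by rw [← Finset.sum_mul]
      _ = η ^ 2 := by rw [← mul_assoc, mul_comm S, hc2, one_mul]
  · exact ⟨0, fun s hs => by
      obtain ⟨p', q', -, -, -, rfl⟩ := hs
      exact Finset.sum_nonneg fun j _ => mul_nonneg (hw0 j) (by positivity)⟩
  · refine ⟨Polynomial.C (c:ℂ) * p, Polynomial.C (c:ℂ) * q, ?_, ?_, ?_, rfl⟩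
    · rwa [natDegree_C_mul (by exact_mod_cast hcpos.ne' : (c:ℂ) ≠ 0)]
    · rwa [natDegree_C_mul (by exact_mod_cast hcpos.ne' : (c:ℂ) ≠ 0)]
    · have : ∀ j ∈ T, w j * ‖(Polynomial.C (c:ℂ) * q).eval (x j)‖ ^ 2
          = c ^ 2 * (w j * ‖q.eval (x j)‖ ^ 2) := by
        intro j hj
        rw [eval_mul, eval_C, norm_mul, habsc, mul_pow]
        ring
      rw [Finset.sum_congr rfl this, ← Finset.mul_sum, hc2]

theorem stmt10 {m : ℕ} (n₁ n₂ : ℕ) (hm : n₁ + n₂ + 2 ≤ m) (x : Fin m → ℂ)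
    (hx : Function.Injective x) (f : Fin m → ℂ)
    (p q : Polynomial ℂ) (hp : p.natDegree ≤ n₁) (hq : q.natDegree ≤ n₂)
    (hq0 : ∀ j, q.eval (x j) ≠ 0) (hcop : IsCoprime p q) (η : ℝ)
    (hub : ∀ j, ‖f j - p.eval (x j) / q.eval (x j)‖ ≤ η)
    (hatt : ∃ j, ‖f j - p.eval (x j) / q.eval (x j)‖ = η)
    (hmin : ∀ p' q' : Polynomial ℂ, p'.natDegree ≤ n₁ → q'.natDegree ≤ n₂ →
      (∀ j, q'.eval (x j) ≠ 0) →
      ∃ j, η ≤ ‖f j - p'.eval (x j) / q'.eval (x j)‖)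
    (hsd : sSup ((d2S n₁ n₂ x f Finset.univ) ''
        {w | (∀ j, 0 ≤ w j) ∧ ∑ j, w j = 1}) = η ^ 2)
    (hmax : ∃ w : Fin m → ℝ, (∀ j, 0 ≤ w j) ∧ (∑ j, w j = 1) ∧
      d2S n₁ n₂ x f Finset.univ w = η ^ 2)
    (hcs : ∀ w : Fin m → ℝ, (∀ j, 0 ≤ w j) → (∑ j, w j = 1) →
      d2S n₁ n₂ x f Finset.univ w = η ^ 2 →
      ∀ j, ‖f j - p.eval (x j) / q.eval (x j)‖ ≠ η → w j = 0)
    (T : Finset (Fin m))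
    (hT : ∀ j, ‖f j - p.eval (x j) / q.eval (x j)‖ = η → j ∈ T) :
    sSup ((d2S n₁ n₂ x f T) '' {w | (∀ j, 0 ≤ w j) ∧ ∑ j ∈ T, w j = 1}) = η ^ 2 := by
  obtain ⟨w, hw0, hw1, hwval⟩ := hmax
  have hzero : ∀ j ∉ T, w j = 0 := fun j hj =>
    hcs w hw0 hw1 hwval j (fun h => hj (hT j h))
  have hsumeq : ∀ g : Fin m → ℝ, ∑ j ∈ T, w j * g j = ∑ j, w j * g j := fun g =>
    Finset.sum_subset (Finset.subset_univ T) (fun j _ hj => by rw [hzero j hj, zero_mul])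
  have hw1T : ∑ j ∈ T, w j = 1 := by
    rw [Finset.sum_subset (Finset.subset_univ T) (fun j _ hj => hzero j hj), hw1]
  have hTval : d2S n₁ n₂ x f T w = η ^ 2 := by
    rw [← hwval]
    unfold d2S
    congr 1
    ext s
    constructor
    · rintro ⟨p', q', h1, h2, h3, rfl⟩
      exact ⟨p', q', h1, h2, by rw [← hsumeq (fun j => ‖q'.eval (x j)‖ ^ 2)]; exact h3,
        hsumeq (fun j => ‖f j * q'.eval (x j) - p'.eval (x j)‖ ^ 2)⟩
    · rintro ⟨p', q', h1, h2, h3, rfl⟩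
      exact ⟨p', q', h1, h2, by rw [hsumeq (fun j => ‖q'.eval (x j)‖ ^ 2)]; exact h3,
        (hsumeq (fun j => ‖f j * q'.eval (x j) - p'.eval (x j)‖ ^ 2)).symm⟩
  have hmem : η ^ 2 ∈ (d2S n₁ n₂ x f T) '' {w | (∀ j, 0 ≤ w j) ∧ ∑ j ∈ T, w j = 1} :=
    ⟨w, ⟨hw0, hw1T⟩, hTval⟩
  have hubset : ∀ a ∈ (d2S n₁ n₂ x f T) '' {w | (∀ j, 0 ≤ w j) ∧ ∑ j ∈ T, w j = 1},
      a ≤ η ^ 2 := by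
    rintro a ⟨v, ⟨hv0, hv1⟩, rfl⟩
    exact d2S_le_aux n₁ n₂ x f T p q hp hq hq0 η hub v hv0 hv1
  exact le_antisymm (csSup_le ⟨_, hmem⟩ hubset) (le_csSup ⟨η ^ 2, hubset⟩ hmem)
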